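/- Let (N_k) be a sequence of integers given by N_k = tr(M^k) for a fixed integer square matrix M. Then there exists an odd positive integer α such that N_{k+α} ≡ N_k (mod 2) for all k ≥ 1. -/

import Mathlib

open Matrix

private lemma double_trace {n : ℕ} (A : Matrix (Fin n) (Fin n) (ZMod 2)) (k : ℕ) :
    (A ^ (2 * k)).trace = (A ^ k).trace := by
  haveI : Fact (Nat.Prime 2) := ⟨Nat.prime_two⟩
  rw [mul_comm, pow_mul, ZMod.trace_pow_card, ZMod.pow_card]

private lemma pow_double_trace {n : ℕ} (A : Matrix (Fin n) (Fin n) (ZMod 2)) (j k : ℕ) :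
    (A ^ (2 ^ j * k)).trace = (A ^ k).trace := by
  induction j with
  | zero => simp
  | succ j ih =>
      rw [pow_succ, mul_comm (2 ^ j) 2, mul_assoc, double_trace, ih]

private lemma pow_eventually_periodic {n : ℕ} (A : Matrix (Fin n) (Fin n) (ZMod 2))
    {i p : ℕ} (h : A ^ (i + p) = A ^ i) (c : ℕ) {a : ℕ} (ha : i ≤ a) :
    A ^ (a + c * p) = A ^ a := by
  induction c with
  | zero => simp
  | succ c ih =>
      have : a + (c + 1) * p = (a - i + c * p) + (i + p) := by
        rw [add_mul, one_mul]; omega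
      rw [this, pow_add, h, ← pow_add]
      have : a - i + c * p + i = a + c * p := by omega
      rw [this, ih]

theorem trace_mod_two_periodic (n : ℕ) (M : Matrix (Fin n) (Fin n) ℤ) :
    ∃ α : ℕ, Odd α ∧ 0 < α ∧
      ∀ k : ℕ, 1 ≤ k → (M ^ (k + α)).trace ≡ (M ^ k).trace [ZMOD 2] := by
  set A : Matrix (Fin n) (Fin n) (ZMod 2) :=
    (Int.castRingHom (ZMod 2)).mapMatrix M with hA
  -- reduce to equality of traces over ZMod 2
  have key : ∀ m : ℕ, ((M ^ m).trace : ZMod 2) = (A ^ m).trace := by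
    intro m
    rw [hA, ← map_pow]
    simp [RingHom.mapMatrix_apply, Matrix.trace, Matrix.diag]
  -- eventual periodicity
  obtain ⟨a, b, hab, he⟩ : ∃ a b : ℕ, a ≠ b ∧ A ^ a = A ^ b :=
    Finite.exists_ne_map_eq_of_infinite (fun m : ℕ => A ^ m)
  -- wlog a < b
  obtain ⟨i, p, hp, hip⟩ : ∃ i p : ℕ, 0 < p ∧ A ^ (i + p) = A ^ i := by
    rcases Nat.lt_or_ge a b with h | h
    · exact ⟨a, b - a, by omega, by rw [show a + (b - a) = b by omega, he]⟩
    · exact ⟨b, a - b, by omega, by rw [show b + (a - b) = a by omega, he]⟩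
  -- odd part of p
  set e := p.factorization 2 with he2
  set m := p / 2 ^ e with hm
  have hpm : 2 ^ e * m = p := Nat.ordProj_mul_ordCompl_eq_self p 2
  have hmodd : Odd m := by
    have h2 := Nat.not_dvd_ordCompl Nat.prime_two (by omega : p ≠ 0)
    exact Nat.odd_iff.mpr (Nat.two_dvd_ne_zero.mp h2)
  have hmpos : 0 < m :=
    Nat.pos_of_ne_zero (by intro h0; rw [h0, mul_zero] at hpm; omega)
  refine ⟨m, hmodd, hmpos, fun k hk => ?_⟩
  have : ((M ^ (k + m)).trace : ZMod 2) = ((M ^ k).trace : ZMod 2) := by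
    rw [key, key]
    set j := max e i with hj
    have h1 : (A ^ (k + m)).trace = (A ^ (2 ^ j * (k + m))).trace :=
      (pow_double_trace A j (k + m)).symm
    have h2 : (A ^ k).trace = (A ^ (2 ^ j * k)).trace :=
      (pow_double_trace A j k).symm
    rw [h1, h2]
    have hsplit : 2 ^ j * (k + m) = 2 ^ j * k + 2 ^ (j - e) * p := by
      rw [← hpm, ← mul_assoc, ← pow_add, Nat.sub_add_cancel (le_max_left e i)]
      ring
    rw [hsplit, pow_eventually_periodic A hip]
    have : j < 2 ^ j := Nat.lt_two_pow_self
    have : i ≤ j := le_max_right e i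
    nlinarith [Nat.one_le_iff_ne_zero.mpr (by omega : k ≠ 0)]
  exact (ZMod.intCast_eq_intCast_iff _ _ _).mp this
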